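/- Suppose R : ℕ → ℕ satisfies R_n ≥ 1, the recursive bound R_n ≤ ∑_{p=1}^{κ_n} ∑_{n_1+⋯+n_p=n} R_{⌈n_1/2⌉}⋯R_{⌈n_p/2⌉} with κ_n = ⌈c n / ln n⌉ for some constant c > 1, and R_n ≤ K h^n for all n for some constants K ≥ 1, h > 1. Then limsup_{n→∞} (R_n)^{1/n} ≤ √h. -/

import Mathlib

open Filter Real Topology


lemma partial_sum_strictMono {p : ℕ} {f : Fin p → ℕ} (hf : ∀ i, 1 ≤ f i) :
    StrictMono (fun i : Fin p => ∑ j ∈ Finset.Iic i, f j) := by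
  intro i j hij
  apply Finset.sum_lt_sum_of_subset (Finset.Iic_subset_Iic.2 hij.le) (Finset.mem_Iic.2 le_rfl)
    (by simp [Finset.mem_Iic, hij.not_ge]) (hf j)
  intros; exact Nat.zero_le _

lemma partial_sum_inj {p : ℕ} {f f' : Fin p → ℕ}
    (h : ∀ i : Fin p, ∑ j ∈ Finset.Iic i, f j = ∑ j ∈ Finset.Iic i, f' j) : f = f' := by
  funext i
  have key : ∀ m : ℕ, ∀ i : Fin p, (i : ℕ) = m → f i = f' i := by
    intro m
    induction m using Nat.strong_induction_on with
    | _ m ih =>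
      intro i him
      have hIio : ∑ j ∈ Finset.Iio i, f j = ∑ j ∈ Finset.Iio i, f' j :=
        Finset.sum_congr rfl fun j hj => ih j (by
          have := Finset.mem_Iio.1 hj
          omega) j rfl
      have hi := h i
      rw [← Finset.Iio_insert, Finset.sum_insert (by simp), Finset.sum_insert (by simp),
        hIio] at hi
      omega
  exact key i i rfl

lemma card_filter_antidiagonalTuple_le (p n : ℕ) :
    ((Finset.Nat.antidiagonalTuple p n).filter (fun f => ∀ i, 1 ≤ f i)).card ≤ n.choose p := by
  have : ((Finset.Nat.antidiagonalTuple p n).filter (fun f => ∀ i, 1 ≤ f i)).card ≤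
      (Finset.powersetCard p (Finset.Icc 1 n)).card := by
    apply Finset.card_le_card_of_injOn
      (fun f => Finset.image (fun i : Fin p => ∑ j ∈ Finset.Iic i, f j) Finset.univ)
    · intro f hf
      rw [Finset.mem_coe, Finset.mem_filter, Finset.Nat.mem_antidiagonalTuple] at hf
      obtain ⟨hsum, hpos⟩ := hf
      rw [Finset.mem_coe, Finset.mem_powersetCard]
      constructor
      · intro x hx
        rw [Finset.mem_image] at hx
        obtain ⟨i, -, rfl⟩ := hx
        rw [Finset.mem_Icc]
        constructor
        · calc 1 ≤ f i := hpos i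
            _ ≤ ∑ j ∈ Finset.Iic i, f j :=
              Finset.single_le_sum (fun _ _ => Nat.zero_le _) (Finset.mem_Iic.2 le_rfl)
        · calc ∑ j ∈ Finset.Iic i, f j ≤ ∑ j, f j :=
              Finset.sum_le_sum_of_subset (Finset.subset_univ _)
            _ = n := hsum
      · rw [Finset.card_image_of_injective _ (partial_sum_strictMono hpos).injective,
          Finset.card_univ, Fintype.card_fin]
    · intro f hf f' hf' heq
      rw [Finset.mem_coe, Finset.mem_filter] at hf hf'
      set s := Finset.image (fun i : Fin p => ∑ j ∈ Finset.Iic i, f j) Finset.univ with hs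
      have hcard : s.card = p := by
        rw [hs, Finset.card_image_of_injective _ (partial_sum_strictMono hf.2).injective,
          Finset.card_univ, Fintype.card_fin]
      have h1 : (fun i : Fin p => ∑ j ∈ Finset.Iic i, f j) = s.orderEmbOfFin hcard :=
        Finset.orderEmbOfFin_unique hcard (fun x => Finset.mem_image_of_mem _ (Finset.mem_univ x))
          (partial_sum_strictMono hf.2)
      have h2 : (fun i : Fin p => ∑ j ∈ Finset.Iic i, f' j) = s.orderEmbOfFin hcard := by
        apply Finset.orderEmbOfFin_unique hcard _ (partial_sum_strictMono hf'.2)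
        have heq' : Finset.image (fun i : Fin p => ∑ j ∈ Finset.Iic i, f j) Finset.univ =
            Finset.image (fun i : Fin p => ∑ j ∈ Finset.Iic i, f' j) Finset.univ := heq
        intro x
        rw [hs, heq']
        exact Finset.mem_image_of_mem _ (Finset.mem_univ x)
      exact partial_sum_inj (fun i => by rw [congrFun h1 i, congrFun h2 i])
  rwa [Finset.card_powersetCard, Nat.card_Icc, Nat.add_sub_cancel] at this


lemma fact_ratio (p d : ℕ) : (p + d).factorial ≤ p.factorial * (p + d) ^ d := by
  induction d with
  | zero => simp
  | succ d ih =>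
    calc (p + (d+1)).factorial = (p + d + 1) * (p + d).factorial := by
          rw [← Nat.add_assoc, Nat.factorial_succ]
      _ ≤ (p + d + 1) * (p.factorial * (p + d) ^ d) := Nat.mul_le_mul_left _ ih
      _ ≤ (p + d + 1) * (p.factorial * (p + d + 1) ^ d) :=
          Nat.mul_le_mul_left _ (Nat.mul_le_mul_left _ (Nat.pow_le_pow_left (by omega) d))
      _ = p.factorial * (p + (d+1)) ^ (d+1) := by ring_nf

lemma pow_div_fact_mono {A : ℝ} {p q : ℕ} (hpq : p ≤ q) (hA : (q : ℝ) ≤ A) :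
    A ^ p / p.factorial ≤ A ^ q / q.factorial := by
  have h0 : (0:ℝ) ≤ A := le_trans (Nat.cast_nonneg q) hA
  obtain ⟨d, rfl⟩ := Nat.exists_eq_add_of_le hpq
  rw [div_le_div_iff₀ (by positivity) (by positivity)]
  have hf : ((p+d).factorial : ℝ) ≤ (p.factorial : ℝ) * ((p:ℝ)+(d:ℝ))^d := by
    exact_mod_cast fact_ratio p d
  have h2 : ((p:ℝ)+(d:ℝ)) ≤ A := by push_cast at hA; exact hA
  have h3 : (0:ℝ) ≤ (p:ℝ)+(d:ℝ) := by positivity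
  calc A ^ p * ((p+d).factorial : ℝ) ≤ A ^ p * ((p.factorial : ℝ) * ((p:ℝ)+(d:ℝ))^d) :=
        mul_le_mul_of_nonneg_left hf (by positivity)
    _ ≤ A ^ p * ((p.factorial : ℝ) * A^d) :=
        mul_le_mul_of_nonneg_left
          (mul_le_mul_of_nonneg_left (pow_le_pow_left₀ h3 h2 d) (by positivity)) (by positivity)
    _ = A ^ (p + d) * p.factorial := by rw [pow_add]; ring

lemma pow_le_exp_fact (k : ℕ) : ((k:ℝ)) ^ k ≤ Real.exp 1 ^ k * k.factorial := by
  have h1 := Real.pow_div_factorial_le_exp (x := (k:ℝ)) (Nat.cast_nonneg k) k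
  rw [Real.exp_one_pow]
  rw [div_le_iff₀ (by positivity)] at h1
  linarith [h1]

lemma pow_div_fact_le {A : ℝ} {k : ℕ} (hk : 1 ≤ k) (hA : 0 ≤ A) :
    A ^ k / k.factorial ≤ (Real.exp 1 * A / k) ^ k := by
  have hk0 : (0:ℝ) < k := by exact_mod_cast hk
  rw [div_pow, mul_pow, div_le_div_iff₀ (by positivity) (by positivity)]
  calc A ^ k * (k:ℝ) ^ k ≤ A ^ k * (Real.exp 1 ^ k * k.factorial) :=
        mul_le_mul_of_nonneg_left (pow_le_exp_fact k) (by positivity)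
    _ = Real.exp 1 ^ k * A ^ k * k.factorial := by ring


lemma prod_bound {R : ℕ → ℕ} {K h : ℝ} (hK : 1 ≤ K) (hh : 1 < h)
    (hbound : ∀ n, (R n : ℝ) ≤ K * h ^ n) {p n : ℕ} {f : Fin p → ℕ} (hsum : ∑ i, f i = n) :
    ∏ i, (R ((f i + 1) / 2) : ℝ) ≤ (K * Real.sqrt h) ^ p * Real.sqrt h ^ n := by
  have h0 : (0:ℝ) < h := lt_trans one_pos hh
  calc ∏ i, (R ((f i + 1) / 2) : ℝ) ≤ ∏ i, (K * h ^ (((f i : ℝ) + 1)/2)) := by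
        apply Finset.prod_le_prod (fun i _ => Nat.cast_nonneg _)
        intro i _
        refine (hbound _).trans ?_
        have hc : ((((f i) + 1)/2 : ℕ) : ℝ) ≤ ((f i : ℝ) + 1)/2 := by
          have := Nat.cast_div_le (m := f i + 1) (n := 2) (α := ℝ)
          push_cast at this ⊢
          linarith
        have : (h : ℝ) ^ (((f i) + 1)/2 : ℕ) ≤ h ^ (((f i : ℝ) + 1)/2) := by
          rw [← Real.rpow_natCast h (((f i) + 1)/2)]
          exact Real.rpow_le_rpow_of_exponent_le hh.le hc
        nlinarith [this, Real.rpow_nonneg h0.le (((f i : ℝ) + 1)/2)]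
    _ = K ^ p * h ^ (∑ i, ((f i : ℝ) + 1)/2) := by
        rw [Finset.prod_mul_distrib, Finset.prod_const, Finset.card_univ, Fintype.card_fin,
          Real.rpow_sum_of_pos h0]
    _ = (K * Real.sqrt h) ^ p * Real.sqrt h ^ n := by
        have hsum' : ∑ i, ((f i : ℝ) + 1)/2 = ((n:ℝ) + p)/2 := by
          rw [← Finset.sum_div, Finset.sum_add_distrib, Finset.sum_const, Finset.card_univ,
            Fintype.card_fin]
          have : ∑ i, ((f i : ℝ)) = (n : ℝ) := by exact_mod_cast congrArg (Nat.cast (R := ℝ)) hsum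
          rw [this]
          push_cast
          simp [nsmul_eq_mul]
        rw [hsum', mul_pow, Real.sqrt_eq_rpow, ← Real.rpow_natCast (h ^ ((1:ℝ)/2)) n,
          ← Real.rpow_natCast (h ^ ((1:ℝ)/2)) p, ← Real.rpow_mul h0.le, ← Real.rpow_mul h0.le,
          mul_assoc, ← Real.rpow_add h0]
        ring_nf

lemma main_est {R : ℕ → ℕ} {c K h : ℝ}
    (hrec : ∀ n : ℕ, 2 ≤ n →
      R n ≤ ∑ p ∈ Finset.Icc 1 ⌈c * n / Real.log n⌉₊,
        ∑ f ∈ (Finset.Nat.antidiagonalTuple p n).filter (fun f => ∀ i, 1 ≤ f i),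
          ∏ i, R ((f i + 1) / 2))
    (hK : 1 ≤ K) (hh : 1 < h) (hbound : ∀ n : ℕ, (R n : ℝ) ≤ K * h ^ n)
    {n : ℕ} (hn : 2 ≤ n) (hκn : ⌈c * n / Real.log n⌉₊ ≤ n) :
    (R n : ℝ) ≤ (⌈c * n / Real.log n⌉₊ : ℝ) *
      (Real.exp 1 * ((n : ℝ) * (K * Real.sqrt h)) / ⌈c * n / Real.log n⌉₊) ^
        (⌈c * n / Real.log n⌉₊ : ℕ) * Real.sqrt h ^ n := by
  set κ : ℕ := ⌈c * n / Real.log n⌉₊ with hκ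
  have h0 : (0:ℝ) < h := lt_trans one_pos hh
  have hsq : 1 ≤ Real.sqrt h := by
    rw [show (1:ℝ) = Real.sqrt 1 by simp]
    exact Real.sqrt_le_sqrt hh.le
  have hB : 1 ≤ K * Real.sqrt h := by nlinarith
  set B : ℝ := K * Real.sqrt h with hBdef
  set A : ℝ := (n : ℝ) * B with hA
  have hAn : (n : ℝ) ≤ A := le_mul_of_one_le_right (Nat.cast_nonneg n) hB
  have hAκ : (κ : ℝ) ≤ A := le_trans (by exact_mod_cast hκn) hAn
  have hA0 : 0 ≤ A := le_trans (Nat.cast_nonneg κ) hAκ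
  -- step 1: cast hrec
  have step1 : (R n : ℝ) ≤ ∑ p ∈ Finset.Icc 1 κ,
      ∑ f ∈ (Finset.Nat.antidiagonalTuple p n).filter (fun f => ∀ i, 1 ≤ f i),
        ∏ i, (R ((f i + 1) / 2) : ℝ) := by
    have := hrec n hn
    exact_mod_cast this
  refine step1.trans ?_
  -- step 2: bound each inner sum
  have step2 : ∀ p ∈ Finset.Icc 1 κ,
      (∑ f ∈ (Finset.Nat.antidiagonalTuple p n).filter (fun f => ∀ i, 1 ≤ f i),
        ∏ i, (R ((f i + 1) / 2) : ℝ)) ≤ A ^ κ / κ.factorial * Real.sqrt h ^ n := by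
    intro p hp
    rw [Finset.mem_Icc] at hp
    have hcard := card_filter_antidiagonalTuple_le p n
    calc (∑ f ∈ (Finset.Nat.antidiagonalTuple p n).filter (fun f => ∀ i, 1 ≤ f i),
          ∏ i, (R ((f i + 1) / 2) : ℝ))
        ≤ ((Finset.Nat.antidiagonalTuple p n).filter (fun f => ∀ i, 1 ≤ f i)).card •
            (B ^ p * Real.sqrt h ^ n) := by
          apply Finset.sum_le_card_nsmul
          intro f hf
          rw [Finset.mem_filter, Finset.Nat.mem_antidiagonalTuple] at hf
          exact prod_bound hK hh hbound hf.1
      _ ≤ (n.choose p : ℝ) * (B ^ p * Real.sqrt h ^ n) := by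
          rw [nsmul_eq_mul]
          apply mul_le_mul_of_nonneg_right _ (by positivity)
          exact_mod_cast hcard
      _ ≤ ((n:ℝ) ^ p / p.factorial) * (B ^ p * Real.sqrt h ^ n) :=
          mul_le_mul_of_nonneg_right (Nat.choose_le_pow_div p n) (by positivity)
      _ = (A ^ p / p.factorial) * Real.sqrt h ^ n := by
          rw [hA, mul_pow]; ring
      _ ≤ A ^ κ / κ.factorial * Real.sqrt h ^ n :=
          mul_le_mul_of_nonneg_right (pow_div_fact_mono hp.2 hAκ) (by positivity)
  calc (∑ p ∈ Finset.Icc 1 κ,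
      ∑ f ∈ (Finset.Nat.antidiagonalTuple p n).filter (fun f => ∀ i, 1 ≤ f i),
        ∏ i, (R ((f i + 1) / 2) : ℝ))
      ≤ ∑ p ∈ Finset.Icc 1 κ, A ^ κ / κ.factorial * Real.sqrt h ^ n :=
        Finset.sum_le_sum step2
    _ = (Finset.Icc 1 κ).card * (A ^ κ / κ.factorial * Real.sqrt h ^ n) := by
        rw [Finset.sum_const, nsmul_eq_mul]
    _ ≤ (κ : ℝ) * (A ^ κ / κ.factorial * Real.sqrt h ^ n) := by
        apply mul_le_mul_of_nonneg_right _ (by positivity)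
        rw [Nat.card_Icc]
        simp
    _ ≤ (κ : ℝ) * ((Real.exp 1 * A / κ) ^ κ * Real.sqrt h ^ n) := by
        rcases Nat.eq_zero_or_pos κ with hκ0 | hκ1
        · simp [hκ0]
        · exact mul_le_mul_of_nonneg_left
            (mul_le_mul_of_nonneg_right (pow_div_fact_le hκ1 hA0) (by positivity))
            (Nat.cast_nonneg κ)
    _ = (κ : ℝ) * (Real.exp 1 * A / κ) ^ κ * Real.sqrt h ^ n := by ring




lemma tendsto_aux {c C : ℝ} (hc : 1 < c) (hC : 1 ≤ C) :
    Tendsto (fun n : ℕ => ((⌈c * n / Real.log n⌉₊ : ℝ) *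
      (Real.exp 1 * ((n : ℝ) * C) / ⌈c * n / Real.log n⌉₊) ^ (⌈c * n / Real.log n⌉₊ : ℕ))
        ^ (1 / (n : ℝ))) atTop (𝓝 1) := by
  have hc0 : (0:ℝ) < c := lt_trans one_pos hc
  set B : ℝ := Real.exp 1 * C / c with hBdef
  have hB0 : 0 < B := by positivity
  set L : ℕ → ℝ := fun n => ((⌈c * n / Real.log n⌉₊ : ℝ) *
      (Real.exp 1 * ((n : ℝ) * C) / ⌈c * n / Real.log n⌉₊) ^ (⌈c * n / Real.log n⌉₊ : ℕ)) with hL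
  set u : ℕ → ℝ := fun n => Real.log n / n +
      (2 * c) * (Real.log (B * Real.log n) / Real.log n) with hu
  -- eventual facts
  have hev : ∀ᶠ n : ℕ in atTop, 2 ≤ n ∧ 2 * c ≤ Real.log n := by
    filter_upwards [eventually_ge_atTop 2,
      (Real.tendsto_log_atTop.comp tendsto_natCast_atTop_atTop).eventually_ge_atTop (2*c)]
      with n h1 h2 using ⟨h1, h2⟩
  have key : ∀ᶠ n : ℕ in atTop, 1 ≤ L n ∧ (1 / (n:ℝ)) * Real.log (L n) ≤ u n := by
    filter_upwards [hev] with n ⟨hn2, hlog⟩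
    have hn0 : (0:ℝ) < n := by positivity
    have hlogpos : 0 < Real.log n := Real.log_pos (by exact_mod_cast hn2)
    set κ : ℕ := ⌈c * n / Real.log n⌉₊ with hκdef
    have hxpos : 0 < c * n / Real.log n := by positivity
    have hκ1 : 1 ≤ κ := Nat.one_le_ceil_iff.2 hxpos
    have hκ0 : (0:ℝ) < κ := by exact_mod_cast hκ1
    have hκge : c * n / Real.log n ≤ (κ : ℝ) := Nat.le_ceil _
    have hκlt : (κ : ℝ) < c * n / Real.log n + 1 := Nat.ceil_lt_add_one hxpos.le
    have hhalf : c * n / Real.log n ≤ n / 2 := by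
      rw [div_le_div_iff₀ hlogpos two_pos]
      nlinarith
    have hn2' : (2:ℝ) ≤ n := by exact_mod_cast hn2
    have hκn : (κ : ℝ) ≤ n := by linarith
    have hc1 : 1 ≤ c * n / Real.log n := by
      have hlogn : Real.log n ≤ n := (Real.log_le_sub_one_of_pos hn0).trans (by linarith)
      rw [le_div_iff₀ hlogpos]
      nlinarith
    have hκ2 : (κ : ℝ) ≤ 2 * (c * n / Real.log n) := by nlinarith
    set t : ℝ := Real.exp 1 * ((n : ℝ) * C) / κ with ht
    have hte : Real.exp 1 ≤ t := by
      rw [ht, le_div_iff₀ hκ0]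
      have h₁ : (κ:ℝ) ≤ (n:ℝ) * C := le_trans hκn (le_mul_of_one_le_right hn0.le hC)
      exact mul_le_mul_of_nonneg_left h₁ (Real.exp_pos 1).le
    have ht1 : 1 ≤ t := le_trans (by nlinarith [Real.add_one_le_exp (1:ℝ)]) hte
    have hL1 : 1 ≤ L n := by
      have : (1:ℝ) ≤ (κ:ℝ) * t ^ κ := by
        have : (1:ℝ) ≤ t ^ κ := one_le_pow₀ ht1
        nlinarith
      simpa [hL] using this
    refine ⟨hL1, ?_⟩
    have hlogL : Real.log (L n) = Real.log κ + κ * Real.log t := by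
      rw [hL]
      simp only
      rw [Real.log_mul (by positivity) (by positivity), Real.log_pow]
    have h1 : Real.log κ ≤ Real.log n := Real.log_le_log hκ0 hκn
    have htB : t ≤ B * Real.log n := by
      have h2 : t ≤ Real.exp 1 * ((n : ℝ) * C) / (c * n / Real.log n) :=
        div_le_div_of_nonneg_left (by positivity) hxpos hκge
      have h3 : Real.exp 1 * ((n : ℝ) * C) / (c * n / Real.log n) = B * Real.log n := by
        rw [hBdef]
        field_simp
      linarith [h2, h3 ▸ h2]
    have hlogt0 : 0 ≤ Real.log t := Real.log_nonneg ht1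
    have h4 : Real.log t ≤ Real.log (B * Real.log n) := Real.log_le_log (by positivity) htB
    have h5 : (κ:ℝ) * Real.log t ≤ 2 * (c * n / Real.log n) * Real.log (B * Real.log n) :=
      mul_le_mul hκ2 h4 hlogt0 (by positivity)
    have h6 : (1 / (n:ℝ)) * Real.log (L n) ≤
        (1 / (n:ℝ)) * (Real.log n + 2 * (c * n / Real.log n) * Real.log (B * Real.log n)) := by
      apply mul_le_mul_of_nonneg_left _ (by positivity)
      rw [hlogL]; linarith
    refine h6.trans (le_of_eq ?_)
    rw [hu]
    field_simp
  -- tendsto of u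
  have hF : Tendsto (fun x : ℝ => Real.log x / x) atTop (𝓝 0) :=
    Real.isLittleO_log_id_atTop.tendsto_div_nhds_zero
  have hu1 : Tendsto (fun n : ℕ => Real.log n / n) atTop (𝓝 0) :=
    hF.comp tendsto_natCast_atTop_atTop
  have hBlog : Tendsto (fun n : ℕ => B * Real.log n) atTop atTop :=
    (Real.tendsto_log_atTop.comp tendsto_natCast_atTop_atTop).const_mul_atTop hB0
  have hu2 : Tendsto (fun n : ℕ => (2*c) * (Real.log (B * Real.log n) / Real.log n)) atTop
      (𝓝 0) := by
    have : ∀ n : ℕ, (2*c) * (Real.log (B * Real.log n) / Real.log n) =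
        (2*c*B) * (Real.log (B * Real.log n) / (B * Real.log n)) := by
      intro n
      rcases eq_or_ne (Real.log n) 0 with h | h
      · simp [h]
      · field_simp
    rw [funext this]
    simpa using ((hF.comp hBlog).const_mul (2*c*B))
  have huten : Tendsto u atTop (𝓝 0) := by
    have := hu1.add hu2
    simpa [hu] using this
  -- squeeze
  have hexp : Tendsto (fun n : ℕ => (1 / (n:ℝ)) * Real.log (L n)) atTop (𝓝 0) := by
    apply squeeze_zero' _ _ huten
    · filter_upwards [key] with n ⟨h1, _⟩
      have : 0 ≤ Real.log (L n) := Real.log_nonneg h1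
      positivity
    · filter_upwards [key] with n ⟨_, h2⟩ using h2
  have : Tendsto (fun n : ℕ => Real.exp ((1 / (n:ℝ)) * Real.log (L n))) atTop (𝓝 1) := by
    have := (Real.continuous_exp.tendsto 0).comp hexp
    simpa [Function.comp_def] using this
  apply this.congr'
  filter_upwards [key] with n ⟨h1, _⟩
  rw [Real.rpow_def_of_pos (by linarith : (0:ℝ) < L n)]
  ring_nf




theorem limsup_root_le_sqrt (R : ℕ → ℕ) (hR : ∀ n, 1 ≤ R n) (c : ℝ) (hc : 1 < c)
    (hrec : ∀ n : ℕ, 2 ≤ n →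
      R n ≤ ∑ p ∈ Finset.Icc 1 ⌈c * n / Real.log n⌉₊,
        ∑ f ∈ (Finset.Nat.antidiagonalTuple p n).filter (fun f => ∀ i, 1 ≤ f i),
          ∏ i, R ((f i + 1) / 2))
    (K h : ℝ) (hK : 1 ≤ K) (hh : 1 < h) (hbound : ∀ n : ℕ, (R n : ℝ) ≤ K * h ^ n) :
    Filter.limsup (fun n : ℕ => (R n : ℝ) ^ (1 / (n : ℝ))) Filter.atTop ≤ Real.sqrt h := by
  have h0 : (0:ℝ) < h := lt_trans one_pos hh
  have hsqpos : 0 < Real.sqrt h := Real.sqrt_pos.2 h0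
  have hsq1 : 1 ≤ Real.sqrt h := by
    rw [show (1:ℝ) = Real.sqrt 1 by simp]
    exact Real.sqrt_le_sqrt hh.le
  have hC : 1 ≤ K * Real.sqrt h := by nlinarith
  have hten := tendsto_aux (C := K * Real.sqrt h) hc hC
  apply le_of_forall_pos_le_add
  intro ε hε
  set b : ℝ := Real.sqrt h + ε with hb
  have hrb : 1 < b / Real.sqrt h := by
    rw [lt_div_iff₀ hsqpos]
    linarith
  -- eventual bound
  have hκev : ∀ᶠ n : ℕ in atTop, 2 ≤ n ∧ ⌈c * n / Real.log n⌉₊ ≤ n := by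
    filter_upwards [eventually_ge_atTop 2,
      (Real.tendsto_log_atTop.comp tendsto_natCast_atTop_atTop).eventually_ge_atTop (2*c)]
      with n h1 h2
    refine ⟨h1, ?_⟩
    have hn0 : (0:ℝ) < n := by positivity
    have hlogpos : 0 < Real.log n := Real.log_pos (by exact_mod_cast h1)
    have hxpos : 0 < c * n / Real.log n := by positivity
    have hκlt : (⌈c * n / Real.log n⌉₊ : ℝ) < c * n / Real.log n + 1 :=
      Nat.ceil_lt_add_one hxpos.le
    simp only [Function.comp] at h2
    have hhalf : c * n / Real.log n ≤ n / 2 := by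
      rw [div_le_div_iff₀ hlogpos two_pos]
      nlinarith [mul_nonneg (sub_nonneg.2 h2) hn0.le]
    have hn2' : (2:ℝ) ≤ n := by exact_mod_cast h1
    have : (⌈c * n / Real.log n⌉₊ : ℝ) ≤ n := by linarith
    exact_mod_cast this
  have hev : ∀ᶠ n : ℕ in atTop, (R n : ℝ) ^ (1 / (n:ℝ)) ≤ b := by
    filter_upwards [hκev, hten.eventually_le_const hrb, eventually_ge_atTop 1]
      with n ⟨hn2, hκn⟩ hLr hn1
    set κ : ℕ := ⌈c * n / Real.log n⌉₊
    set L : ℝ := (κ : ℝ) *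
      (Real.exp 1 * ((n : ℝ) * (K * Real.sqrt h)) / κ) ^ (κ : ℕ) with hLdef
    have hmain : (R n : ℝ) ≤ L * Real.sqrt h ^ n := main_est hrec hK hh hbound hn2 hκn
    have hL0 : 0 ≤ L := by rw [hLdef]; positivity
    have hne : ((n:ℝ)) ≠ 0 := by
      have : (1:ℝ) ≤ (n:ℝ) := by exact_mod_cast hn1
      linarith
    calc (R n : ℝ) ^ (1 / (n:ℝ)) ≤ (L * Real.sqrt h ^ n) ^ (1 / (n:ℝ)) :=
          Real.rpow_le_rpow (Nat.cast_nonneg _) hmain (by positivity)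
      _ = L ^ (1 / (n:ℝ)) * (Real.sqrt h ^ n) ^ (1 / (n:ℝ)) :=
          Real.mul_rpow hL0 (by positivity)
      _ = L ^ (1 / (n:ℝ)) * Real.sqrt h := by
          rw [← Real.rpow_natCast (Real.sqrt h) n, ← Real.rpow_mul (Real.sqrt_nonneg h),
            mul_one_div, div_self hne, Real.rpow_one]
      _ ≤ (b / Real.sqrt h) * Real.sqrt h :=
          mul_le_mul_of_nonneg_right hLr hsqpos.le
      _ = b := div_mul_cancel₀ b hsqpos.ne'
  have hcob : IsCoboundedUnder (· ≤ ·) atTop (fun n : ℕ => (R n : ℝ) ^ (1 / (n:ℝ))) :=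
    isCoboundedUnder_le_of_le atTop (x := 0) fun n => Real.rpow_nonneg (Nat.cast_nonneg _) _
  exact Filter.limsup_le_of_le hcob hev
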